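/- The group of all permutations f of G such that for every S ∈ {{e}, Z \ {e}} ∪ {Y_i : i ∈ F_q} and all g, h ∈ G one has hg⁻¹ ∈ S if and only if f(h)f(g)⁻¹ ∈ S, is exactly the group {x ↦ σ(x)·c : σ ∈ K, c ∈ G}; in particular this group is the semidirect product of the group of right translations of G by K and has order q³(q² − 1). -/

import Mathlib

/-- The Heisenberg group `H₃(F)` of upper unitriangular 3×3 matrices over `F`,
recorded by the three free entries: `x` in position (1,2), `y` in position (2,3),
`z` in position (1,3). -/
@[ext]
structure Heis (F : Type*) where
  x : F
  y : F
  z : F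
deriving DecidableEq

namespace Heis

variable {F : Type*} [Field F]

/-- Multiplication corresponding to the matrix product. -/
instance : Group (Heis F) where
  mul a b := ⟨a.x + b.x, a.y + b.y, a.z + b.z + a.x * b.y⟩
  one := ⟨0, 0, 0⟩
  inv a := ⟨-a.x, -a.y, -a.z + a.x * a.y⟩
  mul_assoc a b c := Heis.ext
    (show a.x + b.x + c.x = a.x + (b.x + c.x) by ring)
    (show a.y + b.y + c.y = a.y + (b.y + c.y) by ring)
    (show a.z + b.z + a.x * b.y + c.z + (a.x + b.x) * c.y
        = a.z + (b.z + c.z + b.x * c.y) + a.x * (b.y + c.y) by ring)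
  one_mul a := Heis.ext
    (show (0 : F) + a.x = a.x by ring)
    (show (0 : F) + a.y = a.y by ring)
    (show (0 : F) + a.z + 0 * a.y = a.z by ring)
  mul_one a := Heis.ext
    (show a.x + 0 = a.x by ring)
    (show a.y + 0 = a.y by ring)
    (show a.z + 0 + a.x * 0 = a.z by ring)
  inv_mul_cancel a := Heis.ext
    (show -a.x + a.x = 0 by ring)
    (show -a.y + a.y = 0 by ring)
    (show -a.z + a.x * a.y + a.z + -a.x * a.y = 0 by ring)

instance [Fintype F] : Fintype (Heis F) :=
  Fintype.ofEquiv (F × F × F)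
    ⟨fun p => ⟨p.1, p.2.1, p.2.2⟩, fun a => (a.x, a.y, a.z), fun _ => rfl, fun _ => rfl⟩

end Heis

/-- The element `g(x,y,z)` of the Heisenberg group. -/
def gElt {F : Type*} (x y z : F) : Heis F := ⟨x, y, z⟩

/-- The center `Z = {g(0,0,z) : z ∈ F}` of the Heisenberg group, as a set. -/
def Zset (F : Type*) [Field F] : Set (Heis F) := {g : Heis F | g.x = 0 ∧ g.y = 0}

/-- The center `Z` as a subgroup of the Heisenberg group. -/
def Zsub (F : Type*) [Field F] : Subgroup (Heis F) where
  carrier := Zset F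
  mul_mem' := fun {a b} ha hb =>
    ⟨show a.x + b.x = 0 by rw [ha.1, hb.1, add_zero],
     show a.y + b.y = 0 by rw [ha.2, hb.2, add_zero]⟩
  one_mem' := ⟨rfl, rfl⟩
  inv_mem' := fun {a} ha =>
    ⟨show -a.x = 0 by rw [ha.1, neg_zero],
     show -a.y = 0 by rw [ha.2, neg_zero]⟩

/-- `γ_i(α,β) = αβ/2 + (α² − εβ²)i`. -/
def gam {F : Type*} [Field F] (ε i α β : F) : F := α * β / 2 + (α ^ 2 - ε * β ^ 2) * i

/-- `Y_i = {g(α, β, γ_i(α,β)) : (α,β) ≠ (0,0)}`. -/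
def Yset {F : Type*} [Field F] (ε i : F) : Set (Heis F) :=
  {g : Heis F | ∃ α β : F, (α, β) ≠ (0, 0) ∧ g = gElt α β (gam ε i α β)}

/-- `X_i = Y_i ∪ {e}`. -/
def Xset {F : Type*} [Field F] (ε i : F) : Set (Heis F) := Yset ε i ∪ {1}

/-- The map `ρ(M) : G → G` attached to the matrix `M = [[α,β],[εβ,α]]`. -/
def rho {F : Type*} [Field F] (ε α β : F) : Heis F → Heis F := fun g =>
  gElt (α * g.x + ε * β * g.y) (β * g.x + α * g.y)
    (α * β * (g.x ^ 2 / 2 + ε * g.y ^ 2 / 2) + ε * β ^ 2 * g.x * g.y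
      + (α ^ 2 - ε * β ^ 2) * g.z)

/-- `K = {ρ(M) : M = [[α,β],[εβ,α]], (α,β) ≠ (0,0)}`, as a set of maps `G → G`. -/
def Kset {F : Type*} [Field F] (ε : F) : Set (Heis F → Heis F) :=
  {f | ∃ α β : F, (α, β) ≠ (0, 0) ∧ f = rho ε α β}

/-- The family of sets `{e}`, `Z \ {e}`, `Y_i` for `i ∈ F`. -/
def SFam {F : Type*} [Field F] (ε : F) : Set (Set (Heis F)) :=
  insert {1} (insert (Zset F \ {1}) {S | ∃ i : F, S = Yset ε i})

/-- `f` preserves each of the basic sets `{e}`, `Z \ {e}`, `Y_i`: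
`hg⁻¹ ∈ S ↔ f(h)f(g)⁻¹ ∈ S`. -/
def Preserves {F : Type*} [Field F] (ε : F) (f : Heis F → Heis F) : Prop :=
  ∀ S ∈ SFam ε, ∀ g h : Heis F, h * g⁻¹ ∈ S ↔ f h * (f g)⁻¹ ∈ S

/-- The set of permutations of `G` of the form `x ↦ σ(x)·c` with `σ ∈ K`, `c ∈ G`. -/
def Aset {F : Type*} [Field F] (ε : F) : Set (Equiv.Perm (Heis F)) :=
  {f | ∃ σ ∈ Kset ε, ∃ c : Heis F, ∀ x : Heis F, f x = σ x * c}

/-- The operation `ψ` on `F ∪ {∞}`, with `∞` encoded as `none`. -/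
def psi {F : Type*} [Field F] [DecidableEq F] (ε : F) : Option F → Option F → Option F
  | none, j => j
  | some i, none => some i
  | some i, some j => if i + j = 0 then none else some ((i * j + ε / 16) / (i + j))

/-- `Y_k` for `k ∈ F ∪ {∞}`, where `Y_∞ = Z \ {e}`. -/
def YInf {F : Type*} [Field F] (ε : F) : Option F → Set (Heis F)
  | some i => Yset ε i
  | none => Zset F \ {1}

namespace Heis
variable {F : Type*} [Field F]
@[simp] lemma mul_x (a b : Heis F) : (a * b).x = a.x + b.x := rfl
@[simp] lemma mul_y (a b : Heis F) : (a * b).y = a.y + b.y := rfl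
@[simp] lemma mul_z (a b : Heis F) : (a * b).z = a.z + b.z + a.x * b.y := rfl
@[simp] lemma inv_x (a : Heis F) : (a⁻¹).x = -a.x := rfl
@[simp] lemma inv_y (a : Heis F) : (a⁻¹).y = -a.y := rfl
@[simp] lemma inv_z (a : Heis F) : (a⁻¹).z = -a.z + a.x * a.y := rfl
@[simp] lemma one_x : (1 : Heis F).x = 0 := rfl
@[simp] lemma one_y : (1 : Heis F).y = 0 := rfl
@[simp] lemma one_z : (1 : Heis F).z = 0 := rfl
lemma one_def : (1 : Heis F) = ⟨0, 0, 0⟩ := rfl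
lemma eq_one_iff (a : Heis F) : a = 1 ↔ a.x = 0 ∧ a.y = 0 ∧ a.z = 0 := by
  rw [Heis.ext_iff]; simp
end Heis

set_option linter.unusedSectionVars false
section Aux
variable {F : Type*} [Field F]

/-- The "moment" `z - xy/2`. -/
def mm (h : Heis F) : F := h.z - h.x * h.y / 2

/-- The norm form. -/
def Nf (ε a b : F) : F := a ^ 2 - ε * b ^ 2

@[simp] lemma gElt_x (x y z : F) : (gElt x y z).x = x := rfl
@[simp] lemma gElt_y (x y z : F) : (gElt x y z).y = y := rfl
@[simp] lemma gElt_z (x y z : F) : (gElt x y z).z = z := rfl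

lemma aniso (ε : F) (hε : ¬IsSquare ε) {a b : F} (h : Nf ε a b = 0) : a = 0 ∧ b = 0 := by
  by_cases hb : b = 0
  · subst hb
    simp [Nf] at h
    exact ⟨by simpa using h, rfl⟩
  · exfalso
    apply hε
    refine ⟨a / b, ?_⟩
    field_simp
    simp only [Nf, sub_eq_zero] at h
    linear_combination -h
lemma eps_ne_zero (ε : F) (hε : ¬IsSquare ε) : ε ≠ 0 := fun h => hε (h ▸ ⟨0, by ring⟩)
lemma Nf_ne_zero (ε : F) (hε : ¬IsSquare ε) {a b : F} (h : ¬(a = 0 ∧ b = 0)) :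
    Nf ε a b ≠ 0 := fun h0 => h (aniso ε hε h0)

lemma mm_diff (h2 : (2:F) ≠ 0) (g h : Heis F) :
    mm (h * g⁻¹) = mm h - mm g + (g.x * h.y - g.y * h.x) / 2 := by
  simp only [mm, Heis.mul_x, Heis.mul_y, Heis.mul_z, Heis.inv_x, Heis.inv_y, Heis.inv_z]
  field_simp
  ring

lemma mem_Zset_iff (h : Heis F) : h ∈ Zset F ↔ h.x = 0 ∧ h.y = 0 := Iff.rfl

lemma mem_Yset_iff (ε i : F) (h : Heis F) :
    h ∈ Yset ε i ↔ ¬(h.x = 0 ∧ h.y = 0) ∧ mm h = i * Nf ε h.x h.y := by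
  constructor
  · rintro ⟨α, β, hne, rfl⟩
    refine ⟨by simpa [Prod.ext_iff] using hne, ?_⟩
    simp [mm, gam, Nf]
    ring
  · rintro ⟨hne, hm⟩
    refine ⟨h.x, h.y, ?_, ?_⟩
    · simpa [Ne, Prod.ext_iff] using hne
    · refine Heis.ext rfl rfl ?_
      show h.z = gam ε i h.x h.y
      simp only [mm, Nf] at hm
      simp only [gam, Nf]
      linear_combination hm

lemma mem_singleton_one_iff (h : Heis F) : h ∈ ({1} : Set (Heis F)) ↔ h = 1 := Iff.rfl

lemma S1_mem (ε : F) : ({1} : Set (Heis F)) ∈ SFam ε := Set.mem_insert _ _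
lemma SZ_mem (ε : F) : (Zset F \ {1}) ∈ SFam ε :=
  Set.mem_insert_iff.mpr (Or.inr (Set.mem_insert _ _))
lemma SY_mem (ε i : F) : Yset ε i ∈ SFam ε :=
  Set.mem_insert_iff.mpr (Or.inr (Set.mem_insert_iff.mpr (Or.inr ⟨i, rfl⟩)))

/-! ### Algebraic identities for `rho` -/

lemma rho_x (ε α β : F) (g : Heis F) : (rho ε α β g).x = α * g.x + ε * β * g.y := rfl
lemma rho_y (ε α β : F) (g : Heis F) : (rho ε α β g).y = β * g.x + α * g.y := rfl

lemma mm_rho (h2 : (2:F) ≠ 0) (ε α β : F) (g : Heis F) :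
    mm (rho ε α β g) = Nf ε α β * mm g := by
  simp only [mm, rho, Nf, gElt_x, gElt_y, gElt_z]
  field_simp
  ring

lemma Nf_rho (ε α β : F) (g : Heis F) :
    Nf ε (rho ε α β g).x (rho ε α β g).y = Nf ε α β * Nf ε g.x g.y := by
  simp only [rho, Nf, gElt_x, gElt_y]
  ring

lemma rho_xy_zero_iff (ε : F) (hε : ¬IsSquare ε) {α β : F} (hn : Nf ε α β ≠ 0) (g : Heis F) :
    ((rho ε α β g).x = 0 ∧ (rho ε α β g).y = 0) ↔ (g.x = 0 ∧ g.y = 0) := by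
  constructor
  · rintro ⟨h1, h2⟩
    simp only [rho, gElt_x, gElt_y] at h1 h2
    constructor
    · have : Nf ε α β * g.x = 0 := by simp only [Nf]; linear_combination α * h1 - ε * β * h2
      exact (mul_eq_zero.mp this).resolve_left hn
    · have : Nf ε α β * g.y = 0 := by simp only [Nf]; linear_combination α * h2 - β * h1
      exact (mul_eq_zero.mp this).resolve_left hn
  · rintro ⟨h1, h2⟩
    simp [rho, h1, h2]

lemma rho_eq_one_iff (ε : F) (hε : ¬IsSquare ε) {α β : F} (hn : Nf ε α β ≠ 0) (g : Heis F) :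
    rho ε α β g = 1 ↔ g = 1 := by
  constructor
  · intro h
    rw [Heis.eq_one_iff] at h
    obtain ⟨hxy, hz⟩ := (rho_xy_zero_iff ε hε hn g).mp ⟨h.1, h.2.1⟩
    rw [Heis.eq_one_iff]
    refine ⟨hxy, hz, ?_⟩
    have h3 := h.2.2
    simp only [rho, gElt_z, hxy, hz] at h3
    have h4 : Nf ε α β * g.z = 0 := by simp only [Nf]; linear_combination h3
    exact (mul_eq_zero.mp h4).resolve_left hn
  · rintro rfl
    refine Heis.ext ?_ ?_ ?_ <;> simp [rho]

lemma rho_hom (h2 : (2:F) ≠ 0) (ε α β : F) (a b : Heis F) :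
    rho ε α β (a * b) = rho ε α β a * rho ε α β b := by
  refine Heis.ext ?_ ?_ ?_
  · simp [rho]; ring
  · simp [rho]; ring
  · simp only [rho, Heis.mul_x, Heis.mul_y, Heis.mul_z, gElt_x, gElt_y, gElt_z]
    field_simp
    ring

lemma rho_one (ε α β : F) : rho ε α β 1 = 1 := by
  refine Heis.ext ?_ ?_ ?_ <;> simp [rho]

lemma rho_inv (h2 : (2:F) ≠ 0) (ε α β : F) (a : Heis F) :
    rho ε α β a⁻¹ = (rho ε α β a)⁻¹ := by
  rw [eq_inv_iff_mul_eq_one, ← rho_hom h2, inv_mul_cancel, rho_one]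

lemma rho_diff (h2 : (2:F) ≠ 0) (ε α β : F) (g h : Heis F) :
    rho ε α β h * (rho ε α β g)⁻¹ = rho ε α β (h * g⁻¹) := by
  rw [rho_hom h2, rho_inv h2]

/-- membership in each basic set is preserved by `rho`. -/
lemma rho_mem_iff (ε : F) (hε : ¬IsSquare ε) (h2 : (2:F) ≠ 0) {α β : F}
    (hn : Nf ε α β ≠ 0) (S : Set (Heis F)) (hS : S ∈ SFam ε) (d : Heis F) :
    d ∈ S ↔ rho ε α β d ∈ S := by
  rcases Set.mem_insert_iff.mp hS with rfl | hS'
  · simp only [mem_singleton_one_iff]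
    exact (rho_eq_one_iff ε hε hn d).symm
  rcases Set.mem_insert_iff.mp hS' with rfl | ⟨i, rfl⟩
  · simp only [Set.mem_diff, mem_Zset_iff, Set.mem_singleton_iff]
    rw [rho_xy_zero_iff ε hε hn, rho_eq_one_iff ε hε hn]
  · simp only [mem_Yset_iff]
    rw [rho_xy_zero_iff ε hε hn, mm_rho h2, Nf_rho]
    constructor
    · rintro ⟨hne, hm⟩
      exact ⟨hne, by rw [hm]; ring⟩
    · rintro ⟨hne, hm⟩
      refine ⟨hne, ?_⟩
      have : Nf ε α β * mm d = Nf ε α β * (i * Nf ε d.x d.y) := by rw [hm]; ring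
      exact mul_left_cancel₀ hn this

/-- Forward direction: every map `x ↦ rho x * c` preserves the family. -/
lemma rho_preserves (ε : F) (hε : ¬IsSquare ε) (h2 : (2:F) ≠ 0) {α β : F}
    (hne : (α, β) ≠ (0,0)) (c : Heis F) :
    Preserves ε (fun x => rho ε α β x * c) := by
  have hn : Nf ε α β ≠ 0 := Nf_ne_zero ε hε (by simpa [Prod.ext_iff] using hne)
  intro S hS g h
  have : rho ε α β h * c * (rho ε α β g * c)⁻¹ = rho ε α β (h * g⁻¹) := by
    rw [← rho_diff h2]
    group
  rw [this]
  exact rho_mem_iff ε hε h2 hn S hS _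

end Aux

section Converse
variable {F : Type*} [Field F]

lemma diff_x (g h : Heis F) : (h * g⁻¹).x = h.x - g.x := by
  simp [sub_eq_add_neg]
lemma diff_y (g h : Heis F) : (h * g⁻¹).y = h.y - g.y := by
  simp [sub_eq_add_neg]

theorem converse_aux (ε : F) (hε : ¬IsSquare ε) (h2 : (2:F) ≠ 0)
    (t : Heis F → Heis F) (hbij : Function.Bijective t) (ht1 : t 1 = 1)
    (hkey : ∀ S ∈ SFam ε, ∀ g h : Heis F, h * g⁻¹ ∈ S ↔ t h * (t g)⁻¹ ∈ S) :
    ∃ α β : F, (α, β) ≠ (0, 0) ∧ ∀ x, t x = rho ε α β x := by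
  -- difference membership in the center is preserved
  have hZd : ∀ g h : Heis F, (h * g⁻¹ ∈ Zset F) ↔ (t h * (t g)⁻¹ ∈ Zset F) := by
    intro g h
    have hz := hkey _ (SZ_mem ε) g h
    have h1 := hkey _ (S1_mem ε) g h
    simp only [mem_singleton_one_iff] at h1
    simp only [Set.mem_diff, Set.mem_singleton_iff] at hz
    by_cases hgh : h * g⁻¹ = 1
    · have h1' : t h * (t g)⁻¹ = 1 := h1.mp hgh
      rw [hgh, h1']
    · have hgh' : t h * (t g)⁻¹ ≠ 1 := fun c => hgh (h1.mpr c)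
      constructor
      · intro hmem; exact (hz.mp ⟨hmem, hgh⟩).1
      · intro hmem; exact (hz.mpr ⟨hmem, hgh'⟩).1
  have hZc : ∀ g h : Heis F, (h.x - g.x = 0 ∧ h.y - g.y = 0) ↔
      ((t h).x - (t g).x = 0 ∧ (t h).y - (t g).y = 0) := by
    intro g h
    have := hZd g h
    simp only [mem_Zset_iff, diff_x, diff_y] at this
    exact this
  -- quantitative color preservation
  have hcolor : ∀ g h : Heis F, ¬(h.x - g.x = 0 ∧ h.y - g.y = 0) →
      mm (t h * (t g)⁻¹) * Nf ε (h.x - g.x) (h.y - g.y)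
        = mm (h * g⁻¹) * Nf ε ((t h).x - (t g).x) ((t h).y - (t g).y) := by
    intro g h hne
    have hn := Nf_ne_zero ε hε hne
    have hmem : h * g⁻¹ ∈ Yset ε (mm (h * g⁻¹) / Nf ε (h.x - g.x) (h.y - g.y)) := by
      rw [mem_Yset_iff, diff_x, diff_y]
      exact ⟨hne, (div_mul_cancel₀ _ hn).symm⟩
    have hmem' := (hkey _ (SY_mem ε _) g h).mp hmem
    rw [mem_Yset_iff, diff_x, diff_y] at hmem'
    rw [hmem'.2]
    field_simp
  -- center goes to center
  set Z0 : F → Heis F := fun s => gElt 0 0 s with hZ0def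
  have hZ01 : Z0 0 = 1 := rfl
  have htZxy : ∀ s : F, (t (Z0 s)).x = 0 ∧ (t (Z0 s)).y = 0 := by
    intro s
    have := (hZc 1 (Z0 s)).mp (by simp [Z0])
    rw [ht1] at this
    simpa using this
  set tau : F → F := fun s => (t (Z0 s)).z with htaudef
  have htZ0 : ∀ s : F, t (Z0 s) = Z0 (tau s) :=
    fun s => Heis.ext (htZxy s).1 (htZxy s).2 rfl
  have htau0 : tau 0 = 0 := by
    simp only [htaudef, hZ01, ht1]; rfl
  -- one-variable relation
  have hstep1 : ∀ (h : Heis F) (s : F), ¬(h.x = 0 ∧ h.y = 0) →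
      (mm (t h) - tau s) * Nf ε h.x h.y = (mm h - s) * Nf ε (t h).x (t h).y := by
    intro h s hne
    have hc := hcolor (Z0 s) h (by simpa [Z0] using hne)
    have e1 : mm (h * (Z0 s)⁻¹) = mm h - s := by
      rw [mm_diff h2]; simp [Z0, mm]
    have e2 : mm (t h * (t (Z0 s))⁻¹) = mm (t h) - tau s := by
      rw [htZ0, mm_diff h2]; simp [Z0, mm]
    rw [e1, e2, htZ0] at hc
    simpa [Z0] using hc
  have hA : ∀ h : Heis F, ¬(h.x = 0 ∧ h.y = 0) →
      mm (t h) * Nf ε h.x h.y = mm h * Nf ε (t h).x (t h).y := by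
    intro h hne
    have := hstep1 h 0 hne
    rw [htau0] at this
    simpa using this
  have htau : ∀ (h : Heis F) (s : F), ¬(h.x = 0 ∧ h.y = 0) →
      tau s * Nf ε h.x h.y = s * Nf ε (t h).x (t h).y := by
    intro h s hne
    have h1 := hstep1 h s hne
    have h0 := hA h hne
    linear_combination h0 - h1
  set lam : F := Nf ε (t (gElt 1 0 0)).x (t (gElt 1 0 0)).y with hlamdef
  have h10 : ¬((gElt (1:F) 0 0).x = 0 ∧ (gElt (1:F) 0 0).y = 0) := by simp
  have htaulam : ∀ s : F, tau s = s * lam := by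
    intro s
    have := htau (gElt 1 0 0) s h10
    rw [hlamdef]
    simp only [gElt_x, gElt_y, Nf] at this ⊢
    linear_combination this
  -- nonvanishing: x,y of t h nonzero for h outside center
  have hnt : ∀ h : Heis F, ¬(h.x = 0 ∧ h.y = 0) → ¬((t h).x = 0 ∧ (t h).y = 0) := by
    intro h hne hc
    apply hne
    have := (hZc 1 h).mpr (by rw [ht1]; simpa using hc)
    simpa using this
  have hlam_ne : lam ≠ 0 := by
    rw [hlamdef]
    exact Nf_ne_zero ε hε (hnt _ h10)
  have hNt : ∀ h : Heis F, ¬(h.x = 0 ∧ h.y = 0) →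
      Nf ε (t h).x (t h).y = lam * Nf ε h.x h.y := by
    intro h hne
    have := htau h 1 hne
    rw [htaulam 1] at this
    linear_combination -this
  have hmt : ∀ h : Heis F, mm (t h) = lam * mm h := by
    intro h
    by_cases hne : h.x = 0 ∧ h.y = 0
    · have hh : h = Z0 h.z := Heis.ext (by simp [Z0, hne.1]) (by simp [Z0, hne.2]) rfl
      rw [hh, htZ0, htaulam]
      simp [Z0, mm, hne.1, hne.2]
      ring
    · have h0 := hA h hne
      rw [hNt h hne] at h0
      have hn := Nf_ne_zero ε hε hne
      apply mul_right_cancel₀ hn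
      linear_combination h0
  -- compatibility with central translations
  have hZ0mul : ∀ (h : Heis F) (s : F), h * Z0 s = (⟨h.x, h.y, h.z + s⟩ : Heis F) := by
    intro h s
    refine Heis.ext (by simp [Z0]) (by simp [Z0]) (by simp [Z0])
  have hcentral : ∀ (h : Heis F) (s : F), t (h * Z0 s) = t h * Z0 (lam * s) := by
    intro h s
    by_cases hne : h.x = 0 ∧ h.y = 0
    · have hh : h = Z0 h.z := Heis.ext (by simp [Z0, hne.1]) (by simp [Z0, hne.2]) rfl
      have hzz : Z0 h.z * Z0 s = Z0 (h.z + s) := by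
        refine Heis.ext (by simp [Z0]) (by simp [Z0]) (by simp [Z0])
      rw [hh, hzz, htZ0, htZ0, htaulam, htaulam]
      refine Heis.ext (by simp [Z0]) (by simp [Z0]) (by simp [Z0]; ring)
    · set h' := h * Z0 s with hh'
      have hx' : h'.x = h.x := by simp [hh', Z0]
      have hy' : h'.y = h.y := by simp [hh', Z0]
      have hsame := (hZc h h').mp (by rw [hx', hy']; simp)
      rw [sub_eq_zero, sub_eq_zero] at hsame
      have hm' : mm (t h') = lam * mm h' := hmt h'
      have hmh' : mm h' = mm h + s := by
        simp [hh', hZ0mul, mm]; ring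
      have hzcomp : (t h').z = (t h).z + lam * s := by
        have e := hm'
        rw [hmh'] at e
        have e2 := hmt h
        simp only [mm, hsame.1, hsame.2] at e
        simp only [mm] at e2
        linear_combination e - e2
      rw [hZ0mul]
      exact Heis.ext hsame.1 hsame.2 hzcomp
  -- two-variable relation
  have hstep2 : ∀ g h : Heis F, ¬(h.x - g.x = 0 ∧ h.y - g.y = 0) → ∀ s : F,
      (mm (t h * (t g)⁻¹) + lam * s) * Nf ε (h.x - g.x) (h.y - g.y)
        = (mm (h * g⁻¹) + s) * Nf ε ((t h).x - (t g).x) ((t h).y - (t g).y) := by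
    intro g h hne s
    have hc := hcolor g (h * Z0 s) (by rw [hZ0mul]; simpa using hne)
    rw [hcentral h s] at hc
    have e1 : mm ((t h * Z0 (lam * s)) * (t g)⁻¹) = mm (t h * (t g)⁻¹) + lam * s := by
      rw [mm_diff h2, mm_diff h2, hZ0mul]
      simp [mm]
      ring
    have e2 : mm ((h * Z0 s) * g⁻¹) = mm (h * g⁻¹) + s := by
      rw [mm_diff h2, mm_diff h2, hZ0mul]
      simp [mm]
      ring
    rw [e1, e2, hZ0mul] at hc
    simpa [Z0] using hc
  -- Fact A : norms of differences scale by lam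
  have factA : ∀ g h : Heis F,
      Nf ε ((t h).x - (t g).x) ((t h).y - (t g).y) = lam * Nf ε (h.x - g.x) (h.y - g.y) := by
    intro g h
    by_cases hne : h.x - g.x = 0 ∧ h.y - g.y = 0
    · have := (hZc g h).mp hne
      rw [hne.1, hne.2, this.1, this.2]
      simp [Nf]
    · have q0 := hstep2 g h hne 0
      have q1 := hstep2 g h hne 1
      simp only [mul_zero, add_zero, mul_one] at q0 q1
      have hn := Nf_ne_zero ε hε hne
      have : lam * Nf ε (h.x - g.x) (h.y - g.y) * Nf ε (h.x - g.x) (h.y - g.y)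
          = Nf ε ((t h).x - (t g).x) ((t h).y - (t g).y) * Nf ε (h.x - g.x) (h.y - g.y) := by
        linear_combination Nf ε (h.x - g.x) (h.y - g.y) * (q1 - q0)
      exact (mul_right_cancel₀ hn this).symm
  -- Fact B : symplectic form scales by lam
  have factB : ∀ g h : Heis F,
      (t g).x * (t h).y - (t g).y * (t h).x = lam * (g.x * h.y - g.y * h.x) := by
    intro g h
    by_cases hne : h.x - g.x = 0 ∧ h.y - g.y = 0
    · obtain ⟨ex', ey'⟩ := (hZc g h).mp hne
      obtain ⟨ex, ey⟩ := hne
      rw [sub_eq_zero] at ex ey ex' ey'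
      rw [ex', ey', ex, ey]
      ring
    · have q0 := hstep2 g h hne 0
      simp only [mul_zero, add_zero] at q0
      rw [factA g h] at q0
      have hn := Nf_ne_zero ε hε hne
      have hq : mm (t h * (t g)⁻¹) = lam * mm (h * g⁻¹) := by
        apply mul_right_cancel₀ hn
        linear_combination q0
      rw [mm_diff h2, mm_diff h2, hmt g, hmt h] at hq
      field_simp at hq
      linear_combination hq
  -- the induced map on the plane
  set L : F × F → Heis F := fun u => (⟨u.1, u.2, 0⟩ : Heis F) with hLdef
  set T : F × F → F × F := fun u => ((t (L u)).x, (t (L u)).y) with hTdef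
  have hL1 : L (0, 0) = 1 := rfl
  have hdecomp : ∀ h : Heis F, h = L (h.x, h.y) * Z0 h.z := by
    intro h
    rw [hZ0mul]
    exact Heis.ext rfl rfl (by simp [L])
  have hTh : ∀ h : Heis F, (t h).x = (T (h.x, h.y)).1 ∧ (t h).y = (T (h.x, h.y)).2 := by
    intro h
    have : t h = t (L (h.x, h.y)) * Z0 (lam * h.z) := by
      conv_lhs => rw [hdecomp h]
      exact hcentral _ _
    rw [this, hZ0mul]
    simp [T]
  have hNfT : ∀ u : F × F, Nf ε (T u).1 (T u).2 = lam * Nf ε u.1 u.2 := by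
    intro u
    have h' := factA 1 (L u)
    rw [ht1] at h'
    simp only [Heis.one_x, Heis.one_y, sub_zero] at h'
    exact h'
  have hBT : ∀ u v : F × F,
      (T u).1 * (T v).1 - ε * (T u).2 * (T v).2 = lam * (u.1 * v.1 - ε * u.2 * v.2) := by
    intro u v
    have n1 := hNfT u
    have n2 := hNfT v
    have n3 := factA (L u) (L v)
    simp only [T, L, Nf] at n1 n2 n3 ⊢
    apply mul_left_cancel₀ h2
    linear_combination n1 + n2 - n3
  have hTomega : ∀ u v : F × F,
      (T u).1 * (T v).2 - (T u).2 * (T v).1 = lam * (u.1 * v.2 - u.2 * v.1) := by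
    intro u v
    have := factB (L u) (L v)
    simpa [T, L] using this
  have hTsur : ∀ w : F × F, ∃ u, T u = w := by
    intro w
    obtain ⟨h, hh⟩ := hbij.2 (L w)
    refine ⟨(h.x, h.y), ?_⟩
    have := hTh h
    rw [hh] at this
    simp only [L] at this
    exact Prod.ext this.1.symm this.2.symm
  have hperp : ∀ p : F × F, (∀ u : F × F, p.1 * (T u).1 - ε * p.2 * (T u).2 = 0) → p = (0, 0) := by
    intro p hp
    obtain ⟨u1, hu1⟩ := hTsur (1, 0)
    obtain ⟨u2, hu2⟩ := hTsur (0, 1)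
    have e1 := hp u1
    have e2 := hp u2
    rw [hu1] at e1
    rw [hu2] at e2
    simp at e1 e2
    have hp2 : p.2 = 0 := by
      rcases e2 with h' | h'
      · exact absurd h' (eps_ne_zero ε hε)
      · exact h'
    exact Prod.ext e1 hp2
  have hTadd : ∀ u v : F × F, T (u + v) = T u + T v := by
    intro u v
    have hp : ∀ w : F × F,
        (T (u + v) - T u - T v).1 * (T w).1 - ε * (T (u + v) - T u - T v).2 * (T w).2 = 0 := by
      intro w
      have e1 := hBT (u + v) w
      have e2 := hBT u w
      have e3 := hBT v w
      simp only [Prod.fst_sub, Prod.snd_sub, Prod.fst_add, Prod.snd_add] at e1 e2 e3 ⊢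
      linear_combination e1 - e2 - e3
    have h0 := hperp _ hp
    have : T (u + v) - T u - T v = 0 := by rw [h0]; rfl
    rw [sub_sub, sub_eq_zero] at this
    exact this
  have hTsmul : ∀ (c : F) (u : F × F), T (c * u.1, c * u.2) = (c * (T u).1, c * (T u).2) := by
    intro c u
    have hp : ∀ w : F × F,
        (T (c * u.1, c * u.2) - (c * (T u).1, c * (T u).2)).1 * (T w).1
          - ε * (T (c * u.1, c * u.2) - (c * (T u).1, c * (T u).2)).2 * (T w).2 = 0 := by
      intro w
      have e1 := hBT (c * u.1, c * u.2) w
      have e2 := hBT u w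
      simp only [Prod.fst_sub, Prod.snd_sub] at e1 e2 ⊢
      linear_combination e1 - c * e2
    have h0 := hperp _ hp
    have : T (c * u.1, c * u.2) - (c * (T u).1, c * (T u).2) = 0 := by rw [h0]; rfl
    rw [sub_eq_zero] at this
    exact this
  -- linear representation
  obtain ⟨a, c, hac⟩ : ∃ a c : F, T (1, 0) = (a, c) := ⟨_, _, rfl⟩
  obtain ⟨b, d, hbd⟩ : ∃ b d : F, T (0, 1) = (b, d) := ⟨_, _, rfl⟩
  have hTrep : ∀ u : F × F, T u = (u.1 * a + u.2 * b, u.1 * c + u.2 * d) := by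
    intro u
    have hsplit : u = (u.1 * 1, u.1 * 0) + (u.2 * 0, u.2 * 1) := by
      refine Prod.ext ?_ ?_ <;> simp
    calc T u = T ((u.1 * 1, u.1 * 0) + (u.2 * 0, u.2 * 1)) := by rw [← hsplit]
    _ = T (u.1 * 1, u.1 * 0) + T (u.2 * 0, u.2 * 1) := hTadd _ _
    _ = (u.1 * (T (1,0)).1, u.1 * (T (1,0)).2) + (u.2 * (T (0,1)).1, u.2 * (T (0,1)).2) := by
          rw [hTsmul u.1 (1,0), hTsmul u.2 (0,1)]
    _ = (u.1 * a + u.2 * b, u.1 * c + u.2 * d) := by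
          rw [hac, hbd]
          refine Prod.ext ?_ ?_ <;> simp
  have e1 : a ^ 2 - ε * c ^ 2 = lam := by
    have h' := hNfT (1, 0)
    rw [hac] at h'
    simp only [Nf] at h'
    linear_combination h'
  have e2 : a * b - ε * c * d = 0 := by
    have h' := hBT (1, 0) (0, 1)
    rw [hac, hbd] at h'
    linear_combination h'
  have e3 : a * d - c * b = lam := by
    have h' := hTomega (1, 0) (0, 1)
    rw [hac, hbd] at h'
    linear_combination h'
  have hd : d = a := by
    apply mul_left_cancel₀ hlam_ne
    linear_combination a * e3 + c * e2 - d * e1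
  have hb : b = ε * c := by
    apply mul_left_cancel₀ hlam_ne
    linear_combination ε * c * e3 + a * e2 - b * e1
  refine ⟨a, c, ?_, ?_⟩
  · intro hcon
    rw [Prod.mk.injEq] at hcon
    apply hlam_ne
    rw [← e1, hcon.1, hcon.2]; ring
  · intro x
    have hx1 : (t x).x = x.x * a + x.y * b := by
      rw [(hTh x).1, hTrep]
    have hx2 : (t x).y = x.x * c + x.y * d := by
      rw [(hTh x).2, hTrep]
    have hrx : (rho ε a c x).x = a * x.x + ε * c * x.y := rfl
    have hry : (rho ε a c x).y = c * x.x + a * x.y := rfl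
    have hxx : (t x).x = (rho ε a c x).x := by rw [hx1, hb, hrx]; ring
    have hyy : (t x).y = (rho ε a c x).y := by rw [hx2, hd, hry]; ring
    refine Heis.ext hxx hyy ?_
    have m1 : mm (t x) = lam * mm x := hmt x
    have m2 : mm (rho ε a c x) = lam * mm x := by
      rw [mm_rho h2]
      have hNac : Nf ε a c = lam := e1
      rw [hNac]
    have hm : mm (t x) = mm (rho ε a c x) := m1.trans m2.symm
    simp only [mm] at hm
    rw [hxx, hyy] at hm
    linear_combination hm

end Converse

section Final
variable {F : Type*} [Field F]

lemma rho_comp (h2 : (2:F) ≠ 0) (ε α β α' β' : F) (x : Heis F) :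
    rho ε α' β' (rho ε α β x) = rho ε (α * α' + ε * β * β') (α * β' + α' * β) x := by
  refine Heis.ext ?_ ?_ ?_
  · simp only [rho, gElt_x, gElt_y]; ring
  · simp only [rho, gElt_x, gElt_y]; ring
  · simp only [rho, gElt_x, gElt_y, gElt_z]
    field_simp
    ring

lemma rho_id (ε : F) (x : Heis F) : rho ε 1 0 x = x := by
  refine Heis.ext ?_ ?_ ?_ <;> · simp [rho]

lemma rho_left_inv (h2 : (2:F) ≠ 0) (ε α β : F) (hn : Nf ε α β ≠ 0) (x : Heis F) :
    rho ε (α / Nf ε α β) (-β / Nf ε α β) (rho ε α β x) = x := by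
  have hn' : α ^ 2 - ε * β ^ 2 ≠ 0 := hn
  rw [rho_comp h2]
  have e1 : α * (α / Nf ε α β) + ε * β * (-β / Nf ε α β) = 1 := by
    simp only [Nf]; field_simp; try ring
  have e2 : α * (-β / Nf ε α β) + α / Nf ε α β * β = 0 := by
    simp only [Nf]; field_simp; try ring
  rw [e1, e2, rho_id]

lemma rho_right_inv (h2 : (2:F) ≠ 0) (ε α β : F) (hn : Nf ε α β ≠ 0) (x : Heis F) :
    rho ε α β (rho ε (α / Nf ε α β) (-β / Nf ε α β) x) = x := by
  have hn' : α ^ 2 - ε * β ^ 2 ≠ 0 := hn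
  rw [rho_comp h2]
  have e1 : α / Nf ε α β * α + ε * (-β / Nf ε α β) * β = 1 := by
    simp only [Nf]; field_simp; try ring
  have e2 : α / Nf ε α β * β + α * (-β / Nf ε α β) = 0 := by
    simp only [Nf]; field_simp; try ring
  rw [e1, e2, rho_id]

/-- The permutation `x ↦ ρ(x)·c`. -/
def rhoPerm (h2 : (2:F) ≠ 0) (ε α β : F) (hn : Nf ε α β ≠ 0) (c : Heis F) : Equiv.Perm (Heis F) where
  toFun x := rho ε α β x * c
  invFun y := rho ε (α / Nf ε α β) (-β / Nf ε α β) (y * c⁻¹)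
  left_inv x := by
    simp only [mul_inv_cancel_right]
    exact rho_left_inv h2 ε α β hn x
  right_inv y := by
    simp only [rho_right_inv h2 ε α β hn]
    exact inv_mul_cancel_right y c

lemma rhoPerm_apply (h2 : (2:F) ≠ 0) (ε α β : F) (hn : Nf ε α β ≠ 0) (c : Heis F) (x : Heis F) :
    rhoPerm h2 ε α β hn c x = rho ε α β x * c := rfl

lemma card_heis [Fintype F] : Nat.card (Heis F) = Fintype.card F ^ 3 := by
  rw [Nat.card_eq_fintype_card]
  have e : F × F × F ≃ Heis F :=
    ⟨fun p => ⟨p.1, p.2.1, p.2.2⟩, fun a => (a.x, a.y, a.z), fun _ => rfl, fun _ => rfl⟩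
  rw [← Fintype.card_congr e, Fintype.card_prod, Fintype.card_prod]
  ring

lemma card_nonzero_pairs [Fintype F] [DecidableEq F] :
    Nat.card {p : F × F // p ≠ (0, 0)} = Fintype.card F ^ 2 - 1 := by
  rw [Nat.card_eq_fintype_card]
  have h1 : Fintype.card {p : F × F // p ≠ (0, 0)}
      = Fintype.card (F × F) - Fintype.card {p : F × F // p = (0, 0)} :=
    Fintype.card_subtype_compl _
  rw [h1, Fintype.card_subtype_eq, Fintype.card_prod]
  ring_nf

end Final

/-- The group of all permutations `f` of `G` such that for every
`S ∈ {{e}, Z \ {e}} ∪ {Y_i : i ∈ F_q}` and all `g, h ∈ G` one has `hg⁻¹ ∈ S ↔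
f(h)f(g)⁻¹ ∈ S`, is exactly the group `{x ↦ σ(x)·c : σ ∈ K, c ∈ G}`; in particular
this group is the semidirect product of the group of right translations of `G` by `K`
and has order `q³(q² − 1)`. -/
theorem statement_8 {F : Type*} [Field F] [Fintype F]
    (hodd : Odd (Fintype.card F)) (ε : F) (hε : ¬IsSquare ε) :
    {f : Equiv.Perm (Heis F) | Preserves ε ⇑f} = Aset ε ∧
    Nat.card {f : Equiv.Perm (Heis F) | Preserves ε ⇑f}
      = Fintype.card F ^ 3 * (Fintype.card F ^ 2 - 1) := by
  classical
  have h2 : (2 : F) ≠ 0 := by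
    have hchar : ringChar F ≠ 2 := by
      intro h
      have h2' := FiniteField.even_card_of_char_two (F := F) h
      have := Nat.odd_iff.mp hodd
      omega
    intro h
    have hdvd := (CharP.cast_eq_zero_iff F (ringChar F) 2).mp h
    rcases (Nat.dvd_prime Nat.prime_two).mp hdvd with h1 | h1
    · exact CharP.ringChar_ne_one h1
    · exact hchar h1
  have hset : {f : Equiv.Perm (Heis F) | Preserves ε ⇑f} = Aset ε := by
    ext f
    simp only [Set.mem_setOf_eq]
    constructor
    · intro hf
      set c := f 1 with hc
      have ht1 : (fun x => f x * c⁻¹) 1 = 1 := by simp [hc]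
      have hbij : Function.Bijective (fun x => f x * c⁻¹) := by
        constructor
        · intro a b hab
          simp only [mul_left_inj] at hab
          exact f.injective hab
        · intro y
          exact ⟨f.symm (y * c), by simp⟩
      have hkey : ∀ S ∈ SFam ε, ∀ g h : Heis F, h * g⁻¹ ∈ S ↔
          (fun x => f x * c⁻¹) h * ((fun x => f x * c⁻¹) g)⁻¹ ∈ S := by
        intro S hS g h
        have heq : f h * c⁻¹ * (f g * c⁻¹)⁻¹ = f h * (f g)⁻¹ := by group
        simp only [heq]
        exact hf S hS g h
      obtain ⟨α, β, hne, hall⟩ := converse_aux ε hε h2 _ hbij ht1 hkey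
      refine ⟨rho ε α β, ⟨α, β, hne, rfl⟩, c, fun x => ?_⟩
      have hx := hall x
      rw [← hx]
      group
    · rintro ⟨σ, ⟨α, β, hne, rfl⟩, c, hfc⟩
      have hp := rho_preserves ε hε h2 hne c
      intro S hS g h
      rw [hfc g, hfc h]
      exact hp S hS g h
  refine ⟨hset, ?_⟩
  rw [hset]
  -- cardinality
  have hmem : ∀ (p : {p : F × F // p ≠ (0, 0)}) (c : Heis F),
      Nf ε p.1.1 p.1.2 ≠ 0 := by
    intro p c
    refine Nf_ne_zero ε hε ?_
    intro hcon
    exact p.2 (by rw [Prod.ext_iff]; exact ⟨hcon.1, hcon.2⟩)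
  let Φ : {p : F × F // p ≠ (0, 0)} × Heis F → Aset ε := fun pc =>
    ⟨rhoPerm h2 ε pc.1.1.1 pc.1.1.2 (hmem pc.1 pc.2) pc.2,
      rho ε pc.1.1.1 pc.1.1.2,
      ⟨pc.1.1.1, pc.1.1.2, by simpa [Prod.ext_iff] using pc.1.2, rfl⟩,
      pc.2, fun x => rfl⟩
  have hΦbij : Function.Bijective Φ := by
    constructor
    · rintro ⟨⟨⟨a, b⟩, hab⟩, c⟩ ⟨⟨⟨a', b'⟩, hab'⟩, c'⟩ h
      have hfun : ∀ x : Heis F, rho ε a b x * c = rho ε a' b' x * c' := by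
        intro x
        have := congrArg (fun u : Aset ε => (u : Equiv.Perm (Heis F)) x) h
        simpa [Φ, rhoPerm_apply] using this
      have hc : c = c' := by
        have := hfun 1
        rwa [rho_one, rho_one, one_mul, one_mul] at this
      have h1 := hfun (gElt 1 0 0)
      rw [hc] at h1
      have h1' : rho ε a b (gElt 1 0 0) = rho ε a' b' (gElt 1 0 0) :=
        mul_right_cancel h1
      have hxa : a = a' := by
        have := congrArg Heis.x h1'
        simpa [rho] using this
      have hxb : b = b' := by
        have := congrArg Heis.y h1'
        simpa [rho] using this
      subst hxa; subst hxb; subst hc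
      rfl
    · rintro ⟨f, hf⟩
      obtain ⟨σ, ⟨a, b, hne, rfl⟩, c, hfc⟩ := hf
      have hne' : ((a, b) : F × F) ≠ (0, 0) := hne
      refine ⟨⟨⟨(a, b), hne'⟩, c⟩, ?_⟩
      apply Subtype.ext
      apply Equiv.ext
      intro x
      show rho ε a b x * c = f x
      exact (hfc x).symm
  have hcard : Nat.card (Aset ε)
      = Nat.card ({p : F × F // p ≠ (0, 0)} × Heis F) :=
    (Nat.card_congr (Equiv.ofBijective Φ hΦbij)).symm
  rw [hcard, Nat.card_prod, card_nonzero_pairs, card_heis, Nat.mul_comm]
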